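/- Let G be a connected graph of order n ≥ 5 that contains a Hamiltonian path and satisfies |E(G)| ≥ 2(n − 2). Then the zero forcing number of G is at most the zero forcing number of its line graph: Z(G) ≤ Z(L(G)). -/
import Mathlib


open SimpleGraph

variable {V : Type*}

/-- `W` is a resolving set of `G`: every pair of distinct vertices is resolved
by some vertex of `W` via graph distance. -/
def IsResolvingSet (G : SimpleGraph V) (W : Set V) : Prop :=
  ∀ u v : V, u ≠ v → ∃ w ∈ W, G.dist u w ≠ G.dist v w

/-- The metric dimension of `G`: minimum cardinality of a resolving set. -/
noncomputable def metricDim (G : SimpleGraph V) : ℕ :=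
  sInf {k | ∃ W : Set V, W.ncard = k ∧ IsResolvingSet G W}

/-- One global application of the zero-forcing color-change rule:
a black vertex `u` forces its unique white neighbor to become black. -/
def zfStep (G : SimpleGraph V) (S : Set V) : Set V :=
  S ∪ {v | ∃ u ∈ S, G.Adj u v ∧ ∀ w, G.Adj u w → w ∉ S → w = v}

/-- `S` is a zero forcing set of `G` if iterating the color-change rule
starting from `S` eventually turns all vertices black. -/
def IsZeroForcingSet (G : SimpleGraph V) (S : Set V) : Prop :=
  ∃ m : ℕ, (zfStep G)^[m] S = Set.univ

/-- The zero forcing number of `G`: minimum cardinality of a zero forcing set. -/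
noncomputable def zeroForcingNum (G : SimpleGraph V) : ℕ :=
  sInf {k | ∃ S : Set V, S.ncard = k ∧ IsZeroForcingSet G S}

/-- The wheel graph `W_{1,n} = C_n + K_1`: hub `none` joined to the cycle `C_n`
on vertices `some i`, `i : Fin n`. -/
def wheelGraph (n : ℕ) : SimpleGraph (Option (Fin n)) :=
  SimpleGraph.fromRel (fun u v =>
    match u, v with
    | none, some _ => True
    | some i, some j => ((i : ℕ) : ZMod n) + 1 = ((j : ℕ) : ZMod n)
    | _, _ => False)

/-- The bouquet of `n` circles of lengths `k 0 + 1, …, k (n-1) + 1`: the cut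
vertex is `none`; the `i`-th circle consists of `none` together with the vertices
`some ⟨i, j⟩`, `j : Fin (k i)`, in cyclic order. -/
def bouquet (n : ℕ) (k : Fin n → ℕ) : SimpleGraph (Option (Σ i : Fin n, Fin (k i))) :=
  SimpleGraph.fromRel (fun u v =>
    match u, v with
    | none, some a => (a.2 : ℕ) = 0 ∨ (a.2 : ℕ) = k a.1 - 1
    | some a, some b => a.1 = b.1 ∧ ((b.2 : ℕ) = (a.2 : ℕ) + 1)
    | _, _ => False)

/-- The path cover number of `G`: the minimum number of vertex-disjoint induced
paths covering all the vertices of `G`. -/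
noncomputable def pathCoverNum (G : SimpleGraph V) : ℕ :=
  sInf {m | ∃ f : V → Fin m, ∀ i : Fin m,
    ∃ k, 1 ≤ k ∧ Nonempty ((G.induce (f ⁻¹' {i})) ≃g SimpleGraph.pathGraph k)}

/-- `G` contains a Hamiltonian path. -/
def HasHamiltonianPath [DecidableEq V] (G : SimpleGraph V) : Prop :=
  ∃ (u v : V) (p : G.Walk u v), p.IsHamiltonian

section AuxZF

lemma subset_zfStep (G : SimpleGraph V) (S : Set V) : S ⊆ zfStep G S :=
  Set.subset_union_left

lemma zfStep_iterate_mono (G : SimpleGraph V) (S : Set V) {j k : ℕ} (h : j ≤ k) :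
    (zfStep G)^[j] S ⊆ (zfStep G)^[k] S := by
  induction k with
  | zero =>
    have : j = 0 := Nat.le_zero.mp h
    subst this; rfl
  | succ k ih =>
    rcases Nat.lt_or_ge j (k + 1) with h' | h'
    · refine (ih (by omega)).trans ?_
      rw [Function.iterate_succ_apply']
      exact subset_zfStep _ _
    · have : j = k + 1 := by omega
      subst this; rfl

/-- The key counting lemma: a zero forcing set of a line graph misses at most
`n - 2` edges, because every forced edge can be assigned an injective "host"
vertex, and (at least) two vertices never host a force. -/
lemma key_lineGraph_bound {V : Type*} [Fintype V] (G : SimpleGraph V)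
    (S : Set G.edgeSet) (hS : IsZeroForcingSet G.lineGraph S) :
    Sᶜ.ncard ≤ Fintype.card V - 2 := by
  classical
  obtain ⟨M, hM⟩ := hS
  rcases Set.eq_empty_or_nonempty Sᶜ with he | hne
  · simp [he]
  set B : ℕ → Set G.edgeSet := fun k => (zfStep G.lineGraph)^[k] S with hBdef
  have hex : ∀ f : G.edgeSet, ∃ k, f ∈ B k :=
    fun f => ⟨M, show f ∈ (zfStep G.lineGraph)^[M] S by rw [hM]; trivial⟩
  set t : G.edgeSet → ℕ := fun f => Nat.find (hex f) with htdef
  have ht_spec : ∀ f, f ∈ B (t f) := fun f => Nat.find_spec (hex f)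
  have ht_min : ∀ f k, k < t f → f ∉ B k := fun f k hk => Nat.find_min (hex f) hk
  have hmono : ∀ {j k : ℕ}, j ≤ k → B j ⊆ B k := fun h => zfStep_iterate_mono _ _ h
  have htpos : ∀ f, f ∉ S → 1 ≤ t f := by
    intro f hf
    rcases Nat.eq_zero_or_pos (t f) with h0 | h1
    · have hsp := ht_spec f
      rw [h0] at hsp
      exact absurd hsp hf
    · exact h1
  -- Every forced edge has a "forcing witness".
  have hforce : ∀ f, f ∉ S → ∃ e, e ∈ B (t f - 1) ∧ G.lineGraph.Adj e f ∧
      ∀ w, G.lineGraph.Adj e w → w ∉ B (t f - 1) → w = f := by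
    intro f hf
    have h1 := htpos f hf
    have hf2 : f ∈ B (t f - 1 + 1) := by
      have := ht_spec f
      rwa [show t f - 1 + 1 = t f by omega]
    rw [show B (t f - 1 + 1) = zfStep G.lineGraph (B (t f - 1)) from
      Function.iterate_succ_apply' _ _ _] at hf2
    rcases hf2 with h | h
    · exact absurd h (ht_min f _ (by omega))
    · obtain ⟨e, he, hadj, huq⟩ := h
      exact ⟨e, he, hadj, huq⟩
  -- host data: `φ f` is the vertex shared by `f` and its forcing edge `ε f`.
  have hhost : ∀ f : G.edgeSet, ∃ (v : V) (e : G.edgeSet), f ∉ S → e ∈ B (t f - 1) ∧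
      (∀ w, G.lineGraph.Adj e w → w ∉ B (t f - 1) → w = f) ∧
      v ∈ (e : Sym2 V) ∧ v ∈ (f : Sym2 V) := by
    intro f
    by_cases hf : f ∉ S
    · obtain ⟨e, he, hadj, huq⟩ := hforce f hf
      obtain ⟨hne', v, hv1, hv2⟩ := lineGraph_adj_iff_exists.mp hadj
      exact ⟨v, e, fun _ => ⟨he, huq, hv1, hv2⟩⟩
    · exact ⟨(f : Sym2 V).out.1, f, fun h => absurd h hf⟩
  choose φ ε hp using hhost
  have hmem : ∀ f, f ∉ S → ε f ∈ B (t f - 1) := fun f hf => (hp f hf).1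
  have huniq : ∀ f, f ∉ S → ∀ w, G.lineGraph.Adj (ε f) w → w ∉ B (t f - 1) → w = f :=
    fun f hf => (hp f hf).2.1
  have hφε : ∀ f, f ∉ S → φ f ∈ ((ε f : G.edgeSet) : Sym2 V) := fun f hf => (hp f hf).2.2.1
  have hφf : ∀ f, f ∉ S → φ f ∈ ((f : G.edgeSet) : Sym2 V) := fun f hf => (hp f hf).2.2.2
  -- the central uniqueness claim
  have claimC : ∀ f g, f ∉ S → g ∉ S → t f ≤ t g → φ f ∈ (g : Sym2 V) → g = f := by
    intro f g hf hg htle hmemg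
    have hgB : g ∉ B (t f - 1) := fun h =>
      ht_min g (t g - 1) (by have := htpos g hg; omega)
        (hmono (show t f - 1 ≤ t g - 1 by omega) h)
    have hneg : ε f ≠ g := fun h => hgB (h ▸ hmem f hf)
    have hadj : G.lineGraph.Adj (ε f) g :=
      lineGraph_adj_iff_exists.mpr ⟨hneg, φ f, hφε f hf, hmemg⟩
    exact huniq f hf g hadj hgB
  -- min and max of `t` over forced edges
  obtain ⟨f0, hf0, hminf⟩ := Set.exists_min_image Sᶜ t (Set.toFinite _) hne
  obtain ⟨fm, hfm, hmaxf⟩ := Set.exists_max_image Sᶜ t (Set.toFinite _) hne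
  have hf0S : f0 ∉ S := hf0
  have hfmS : fm ∉ S := hfm
  -- before the first force happens, the black set is exactly `S`
  have hBS : B (t f0 - 1) = S := by
    apply Set.Subset.antisymm
    · intro g hg
      by_contra hgS
      exact ht_min g (t g - 1) (by have := htpos g hgS; omega)
        (hmono (show t f0 - 1 ≤ t g - 1 by have := hminf g hgS; have := htpos g hgS; omega) hg)
    · exact hmono (Nat.zero_le _)
  have he0S : ε f0 ∈ S := hBS ▸ hmem f0 hf0S
  -- `x` : the endpoint of `ε f0` other than `φ f0`; all edges at `x` are in `S`.
  obtain ⟨x, hx⟩ := Sym2.mem_iff_exists.mp (hφε f0 hf0S)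
  have hxv0 : φ f0 ≠ x := by
    intro h
    exact G.not_isDiag_of_mem_edgeSet (ε f0).2 (by rw [hx]; exact Sym2.mk_isDiag_iff.mpr h)
  have hxmem : x ∈ ((ε f0 : G.edgeSet) : Sym2 V) := by rw [hx]; exact Sym2.mem_mk_right _ _
  have hxS : ∀ g : G.edgeSet, x ∈ (g : Sym2 V) → g ∈ S := by
    intro g hxg
    by_contra hgS
    have hneg : ε f0 ≠ g := fun h => hgS (h ▸ he0S)
    have hadj : G.lineGraph.Adj (ε f0) g :=
      lineGraph_adj_iff_exists.mpr ⟨hneg, x, hxmem, hxg⟩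
    have hgB : g ∉ B (t f0 - 1) := by rw [hBS]; exact hgS
    have hgf0 : g = f0 := huniq f0 hf0S g hadj hgB
    have hxf0 : x ∈ ((f0 : G.edgeSet) : Sym2 V) := hgf0 ▸ hxg
    have : ((f0 : G.edgeSet) : Sym2 V) = ((ε f0 : G.edgeSet) : Sym2 V) :=
      Sym2.eq_of_ne_mem hxv0 (hφf f0 hf0S) hxf0 (hφε f0 hf0S) hxmem
    exact hf0S (Subtype.ext this ▸ he0S)
  -- `u` : the endpoint of the last forced edge `fm` other than `φ fm`.
  obtain ⟨u, hu⟩ := Sym2.mem_iff_exists.mp (hφf fm hfmS)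
  have huφ : φ fm ≠ u := by
    intro h
    exact G.not_isDiag_of_mem_edgeSet fm.2 (by rw [hu]; exact Sym2.mk_isDiag_iff.mpr h)
  have humem : u ∈ ((fm : G.edgeSet) : Sym2 V) := by rw [hu]; exact Sym2.mem_mk_right _ _
  have hxu : x ≠ u := by
    intro h
    exact hfmS (hxS fm (h ▸ humem))
  -- `φ` maps forced edges injectively into `univ \ {u, x}`
  have hmaps : ∀ f ∈ Sᶜ, φ f ∈ (Set.univ \ {u, x} : Set V) := by
    intro f hf
    refine ⟨trivial, ?_⟩
    intro hmem2
    rcases hmem2 with h | h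
    · have hffm : fm = f := claimC f fm hf hfmS (hmaxf f hf) (h ▸ humem)
      exact huφ (by rw [hffm]; exact h)
    · have h' : φ f = x := h
      exact hf (hxS f (h' ▸ hφf f hf))
  have hinj : Set.InjOn φ Sᶜ := by
    intro f1 h1 f2 h2 heq
    rcases le_total (t f1) (t f2) with hle | hle
    · exact (claimC f1 f2 h1 h2 hle (by rw [heq]; exact hφf f2 h2)).symm
    · exact claimC f2 f1 h2 h1 hle (by rw [← heq]; exact hφf f1 h1)
  have hcount := Set.ncard_le_ncard_of_injOn φ hmaps hinj (Set.toFinite _)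
  have hV : (Set.univ \ {u, x} : Set V).ncard = Fintype.card V - 2 := by
    rw [Set.ncard_diff (Set.subset_univ _), Set.ncard_univ, Nat.card_eq_fintype_card,
      Set.ncard_pair (Ne.symm hxu)]
  omega

/-- Forcing with all vertices black except `a, b`, where `c ~ a`, `c ≁ b`. -/
lemma zfs_two (G : SimpleGraph V) {a b c : V}
    (hab : a ≠ b) (hcb : c ≠ b) (hca : G.Adj c a) (hncb : ¬G.Adj c b)
    (hbd : ∃ d, G.Adj b d) :
    IsZeroForcingSet G (Set.univ \ {a, b}) := by
  refine ⟨2, ?_⟩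
  set S := (Set.univ \ {a, b} : Set V) with hSdef
  have hmemS : ∀ w : V, w ≠ a → w ≠ b → w ∈ S := by
    intro w h1 h2
    exact ⟨trivial, by simp [h1, h2]⟩
  have hc : c ∈ S := hmemS c hca.ne hcb
  have ha1 : a ∈ zfStep G S := by
    refine Set.mem_union_right _ ⟨c, hc, hca, ?_⟩
    intro w hw hwS
    by_contra hwa
    have hwb : w = b := by
      by_contra hwb
      exact hwS (hmemS w hwa hwb)
    exact hncb (hwb ▸ hw)
  have hsub : S ⊆ zfStep G S := subset_zfStep _ _
  have h2 : zfStep G (zfStep G S) = Set.univ := by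
    ext v
    simp only [Set.mem_univ, iff_true]
    by_cases hvb : v = b
    · subst hvb
      obtain ⟨d, hd⟩ := hbd
      have hdB : d ∈ zfStep G S := by
        by_cases hda : d = a
        · exact hda ▸ ha1
        · exact hsub (hmemS d hda hd.ne.symm)
      refine Set.mem_union_right _ ⟨d, hdB, hd.symm, ?_⟩
      intro w hw hwB
      by_contra hwb
      apply hwB
      by_cases hwa : w = a
      · exact hwa ▸ ha1
      · exact hsub (hmemS w hwa hwb)
    · apply subset_zfStep
      by_cases hva : v = a
      · exact hva ▸ ha1
      · exact hsub (hmemS v hva hvb)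
  exact h2

/-- Forcing with all vertices black except `b`, in a complete graph. -/
lemma zfs_one (G : SimpleGraph V) {a b : V} (hab : a ≠ b)
    (hcomp : ∀ x y : V, x ≠ y → G.Adj x y) :
    IsZeroForcingSet G (Set.univ \ {b}) := by
  refine ⟨1, ?_⟩
  ext v
  simp only [Set.mem_univ, iff_true]
  show v ∈ zfStep G (Set.univ \ {b})
  by_cases hvb : v = b
  · subst hvb
    refine Set.mem_union_right _ ⟨a, ⟨trivial, by simp [hab]⟩, hcomp a v hab, ?_⟩
    intro w hw hwS
    by_contra hwb
    exact hwS ⟨trivial, by simp [hwb]⟩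
  · exact subset_zfStep _ _ ⟨trivial, by simp [hvb]⟩

end AuxZF

/-- If `G` is connected of order `n ≥ 5`, contains a Hamiltonian path, and has
`|E(G)| ≥ 2(n-2)` edges, then `Z(G) ≤ Z(L(G))`. -/
theorem zeroForcingNum_le_zeroForcingNum_lineGraph_of_hamiltonianPath {V : Type*}
    [Fintype V] [DecidableEq V] (G : SimpleGraph V)
    (hn : 5 ≤ Fintype.card V) (hconn : G.Connected) (hham : HasHamiltonianPath G)
    (hE : 2 * (Fintype.card V - 2) ≤ G.edgeSet.ncard) :
    zeroForcingNum G ≤ zeroForcingNum G.lineGraph := by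
  classical
  set n := Fintype.card V with hndef
  -- every vertex has a neighbor
  have hnontriv : Nontrivial V := Fintype.one_lt_card_iff_nontrivial.mp (by omega)
  have hadjex : ∀ v : V, ∃ w, G.Adj v w := by
    intro v
    obtain ⟨y, hy⟩ := exists_ne v
    obtain ⟨w⟩ := hconn.preconnected v y
    cases w with
    | nil => exact absurd rfl hy
    | cons h p => exact ⟨_, h⟩
  have hne_set : {k | ∃ S : Set G.edgeSet, S.ncard = k ∧
      IsZeroForcingSet G.lineGraph S}.Nonempty :=
    ⟨(Set.univ : Set G.edgeSet).ncard, Set.univ, rfl, ⟨0, rfl⟩⟩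
  apply le_csInf hne_set
  rintro k ⟨S, rfl, hS⟩
  have hkey := key_lineGraph_bound G S hS
  have hsplit : S.ncard + Sᶜ.ncard = G.edgeSet.ncard := by
    rw [Set.ncard_add_ncard_compl, Nat.card_coe_set_eq]
  by_cases hcomp : ∀ x y : V, x ≠ y → G.Adj x y
  · -- complete case
    obtain ⟨a, b, hab⟩ := exists_pair_ne V
    have hZle : zeroForcingNum G ≤ (Set.univ \ {b} : Set V).ncard :=
      Nat.sInf_le ⟨Set.univ \ {b}, rfl, zfs_one G hab hcomp⟩
    have hcard1 : (Set.univ \ {b} : Set V).ncard = n - 1 := by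
      rw [Set.ncard_diff (Set.subset_univ _), Set.ncard_univ, Nat.card_eq_fintype_card,
        Set.ncard_singleton]
    have hGtop : G = ⊤ := by
      ext x y
      simp only [top_adj]
      exact ⟨fun h => h.ne, fun h => hcomp x y h⟩
    have hm : G.edgeSet.ncard = n.choose 2 := by
      rw [← Nat.card_coe_set_eq, hGtop, edgeSet_top, Nat.card_eq_fintype_card]
      exact Sym2.card_subtype_not_diag
    have hch : 2 * n - 3 ≤ n.choose 2 := by
      rw [Nat.choose_two_right, Nat.le_div_iff_mul_le (by norm_num : (0:ℕ) < 2)]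
      obtain ⟨p, hp⟩ : ∃ p, n = p + 5 := ⟨n - 5, by omega⟩
      rw [hp, show 2 * (p + 5) - 3 = 2 * p + 7 by omega, show p + 5 - 1 = p + 4 by omega]
      nlinarith
    omega
  · -- non-complete case
    push_neg at hcomp
    obtain ⟨x, y, hxy, hnxy⟩ := hcomp
    have htriple : ∃ a b c : V, a ≠ b ∧ c ≠ b ∧ G.Adj c a ∧ ¬G.Adj c b := by
      by_contra h
      push_neg at h
      obtain ⟨c, hc⟩ := hadjex x
      have hcy : c ≠ y := fun h' => hnxy (h' ▸ hc)
      have h1 : G.Adj c y := h x y c hxy hcy hc.symm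
      have h2 : G.Adj y x := h c x y hc.ne.symm hxy.symm h1.symm
      exact hnxy h2.symm
    obtain ⟨a, b, c, hab, hcb, hca, hncb⟩ := htriple
    have hZle : zeroForcingNum G ≤ (Set.univ \ {a, b} : Set V).ncard :=
      Nat.sInf_le ⟨Set.univ \ {a, b}, rfl, zfs_two G hab hcb hca hncb (hadjex b)⟩
    have hcard2 : (Set.univ \ {a, b} : Set V).ncard = n - 2 := by
      rw [Set.ncard_diff (Set.subset_univ _), Set.ncard_univ, Nat.card_eq_fintype_card,
        Set.ncard_pair hab]
    omega
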